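/- Let T be a spanning tree of a graph K on vertex set X, and T' another spanning tree of K with a different edge set. Then for every edge pq of T not in T', the unique path in T' from p to q contains an edge rs not in T such that pq lies on the unique path in T from r to s. -/

import Mathlib

theorem spanning_tree_exchange_edge {V : Type*} [Fintype V]
    {K T T' : SimpleGraph V} (hTK : T ≤ K) (hT'K : T' ≤ K)
    (hT : T.IsTree) (hT' : T'.IsTree) (hne : T.edgeSet ≠ T'.edgeSet) :
    ∀ p q : V, T.Adj p q → s(p, q) ∉ T'.edgeSet →
      ∀ P : T'.Walk p q, P.IsPath →
        ∃ r s : V, s(r, s) ∈ P.edges ∧ s(r, s) ∉ T.edgeSet ∧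
          ∀ Q : T.Walk r s, Q.IsPath → s(p, q) ∈ Q.edges := by
  intro p q hpq hpq' P hP
  -- pq is a bridge in T
  have hbridge : T.IsBridge s(p, q) :=
    (SimpleGraph.isAcyclic_iff_forall_adj_isBridge.mp hT.IsAcyclic) hpq
  have hnr : ¬(T \ SimpleGraph.fromEdgeSet {s(p, q)}).Reachable p q :=
    SimpleGraph.isBridge_iff.mp hbridge
  set G := T \ SimpleGraph.fromEdgeSet {s(p, q)} with hG
  set S : Set V := {x | G.Reachable p x} with hS
  have hpS : p ∈ S := SimpleGraph.Reachable.refl p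
  have hqS : q ∉ S := hnr
  obtain ⟨d, hd, hd1, hd2⟩ := P.exists_boundary_dart S hpS hqS
  refine ⟨d.fst, d.snd, ?_, ?_, ?_⟩
  · exact List.mem_map_of_mem hd
  · -- d.edge ≠ s(p,q) since d.edge ∈ T'.edgeSet
    intro hmem
    have hedge' : s(d.fst, d.snd) ∈ T'.edgeSet := P.edges_subset_edgeSet (List.mem_map_of_mem hd)
    have hne' : s(d.fst, d.snd) ≠ s(p, q) := fun h => hpq' (h ▸ hedge')
    have hGadj : G.Adj d.fst d.snd := by
      rw [hG]
      refine ⟨hmem, ?_⟩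
      simp only [SimpleGraph.fromEdgeSet_adj, Set.mem_singleton_iff]
      intro h
      exact hne' h.1
    exact hd2 (hd1.trans hGadj.reachable)
  · intro Q hQ
    by_contra hnot
    have : G.Reachable d.fst d.snd := ⟨Q.toDeleteEdge s(p, q) hnot⟩
    exact hd2 (hd1.trans this)
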